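/- If p ∈ C_max(nA,nB,m), then for every x, i and every y, the marginal ∑_j p x y i j is a rational number, and for every y, j and every x, the marginal ∑_i p x y i j is a rational number. -/

import Mathlib

open scoped BigOperators

/-- A correlation with `nA` questions for Alice, `nB` questions for Bob and `m` outcomes. -/
def IsCorrelation {nA nB m : ℕ} (p : Fin nA → Fin nB → Fin m → Fin m → ℝ) : Prop :=
  (∀ x y i j, 0 ≤ p x y i j) ∧ ∀ x y, (∑ i, ∑ j, p x y i j) = 1

/-- A projection-valued measure with `m` outcomes on `ℂ^d`. -/
def IsPVM {d m : ℕ} (E : Fin m → Matrix (Fin d) (Fin d) ℂ) : Prop :=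
  (∀ i, (E i).IsHermitian) ∧ (∀ i, E i * E i = E i) ∧ (∑ i, E i = 1)

/-- The set `C_{max,d}(nA,nB,m)` of maximally entangled correlations in dimension `d`. -/
def CmaxD (nA nB m d : ℕ) : Set (Fin nA → Fin nB → Fin m → Fin m → ℝ) :=
  {p | IsCorrelation p ∧
    ∃ (E : Fin nA → Fin m → Matrix (Fin d) (Fin d) ℂ)
      (F : Fin nB → Fin m → Matrix (Fin d) (Fin d) ℂ),
      (∀ x, IsPVM (E x)) ∧ (∀ y, IsPVM (F y)) ∧
      ∀ x y i j, (p x y i j : ℂ) = (1 / (d : ℂ)) * (E x i * F y j).trace}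

/-- The set `C_max(nA,nB,m)` of maximally entangled correlations. -/
def Cmax (nA nB m : ℕ) : Set (Fin nA → Fin nB → Fin m → Fin m → ℝ) :=
  ⋃ (d : ℕ) (_ : 1 ≤ d), CmaxD nA nB m d

/-- A correlation with the same questions for Alice and Bob is synchronous if
`p x x i j = 0` whenever `i ≠ j`. -/
def Synchronous {n m : ℕ} (p : Fin n → Fin n → Fin m → Fin m → ℝ) : Prop :=
  ∀ x i j, i ≠ j → p x x i j = 0

/-- The set `C_max^s(n,m)` of synchronous maximally entangled correlations. -/
def CmaxSync (n m : ℕ) : Set (Fin n → Fin n → Fin m → Fin m → ℝ) :=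
  {p ∈ Cmax n n m | Synchronous p}

/-- The trace of an idempotent complex matrix is a natural number (its rank). -/
lemma trace_idem {d : ℕ} (E : Matrix (Fin d) (Fin d) ℂ) (h : E * E = E) :
    ∃ n : ℕ, E.trace = n := by
  have hf : Matrix.toLin' E ∘ₗ Matrix.toLin' E = Matrix.toLin' E := by
    rw [← Matrix.toLin'_mul, h]
  obtain ⟨p, hp⟩ := (LinearMap.isProj_iff_isIdempotentElem _).mpr hf
  refine ⟨Module.finrank ℂ p, ?_⟩
  have := hp.trace
  rw [LinearMap.trace_eq_matrix_trace ℂ (Pi.basisFun ℂ (Fin d))] at this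
  rwa [LinearMap.toMatrix_eq_toMatrix', LinearMap.toMatrix'_toLin'] at this

lemma real_of_complex_rat {r : ℝ} {n d : ℕ} (h : (r : ℂ) = (n : ℂ) / (d : ℂ)) :
    ∃ q : ℚ, r = (q : ℝ) := by
  refine ⟨(n : ℚ) / (d : ℚ), ?_⟩
  have : (r : ℂ) = (((n : ℚ) / (d : ℚ) : ℚ) : ℝ) := by push_cast; exact h
  exact_mod_cast this

/-- A maximally entangled correlation has rational marginal densities. -/
theorem Cmax_marginals_rational {nA nB m : ℕ}
    (p : Fin nA → Fin nB → Fin m → Fin m → ℝ) (hp : p ∈ Cmax nA nB m) :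
    (∀ (x : Fin nA) (i : Fin m) (y : Fin nB), ∃ q : ℚ, (∑ j, p x y i j) = (q : ℝ)) ∧
    (∀ (y : Fin nB) (j : Fin m) (x : Fin nA), ∃ q : ℚ, (∑ i, p x y i j) = (q : ℝ)) := by
  simp only [Cmax, Set.mem_iUnion] at hp
  obtain ⟨d, hd, _, E, F, hE, hF, htr⟩ := hp
  have hdc : (d : ℂ) ≠ 0 := by exact_mod_cast (Nat.pos_of_ne_zero (by omega)).ne'
  constructor
  · intro x i y
    obtain ⟨n, hn⟩ := trace_idem (E x i) ((hE x).2.1 i)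
    apply real_of_complex_rat (n := n) (d := d)
    push_cast
    calc (∑ j, (p x y i j : ℂ)) = ∑ j, (1 / (d : ℂ)) * (E x i * F y j).trace := by
          exact Finset.sum_congr rfl fun j _ => htr x y i j
      _ = (1 / (d : ℂ)) * (E x i * ∑ j, F y j).trace := by
          rw [Matrix.mul_sum, Matrix.trace_sum, Finset.mul_sum]
      _ = (n : ℂ) / (d : ℂ) := by
          rw [(hF y).2.2, mul_one, hn]; field_simp
  · intro y j x
    obtain ⟨n, hn⟩ := trace_idem (F y j) ((hF y).2.1 j)
    apply real_of_complex_rat (n := n) (d := d)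
    push_cast
    calc (∑ i, (p x y i j : ℂ)) = ∑ i, (1 / (d : ℂ)) * (E x i * F y j).trace := by
          exact Finset.sum_congr rfl fun i _ => htr x y i j
      _ = (1 / (d : ℂ)) * ((∑ i, E x i) * F y j).trace := by
          rw [Matrix.sum_mul, Matrix.trace_sum, Finset.mul_sum]
      _ = (n : ℂ) / (d : ℂ) := by
          rw [(hE x).2.2, one_mul, hn]; field_simp
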